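/- arXiv:1103.3581 — 3 statements merged into one kernel-verified Lean document; each statement's English description precedes it below -/
import Mathlib

section
/- For every odd prime r with r ≠ 5 there exists a finite group P whose cardinality is a power of r, whose nilpotency class is exactly two, together with an injective group homomorphism φ from the symmetric group Equiv.Perm (Fin 5) into the automorphism group of P, such that some element s of Equiv.Perm (Fin 5) of order 5 acts fixed point freely on P, i.e. for every x ∈ P, if φ(s)(x) = x then x = 1. -/
namespace APW

open scoped commutatorElement

variable (r : ℕ)

/-- The sum-zero subgroup of `Fin 5 → ZMod r`. -/
def A : AddSubgroup (Fin 5 → ZMod r) where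
  carrier := {f | ∑ i, f i = 0}
  add_mem' := by
    intro f g hf hg
    simp only [Set.mem_setOf_eq, Pi.add_apply, Finset.sum_add_distrib] at *
    rw [hf, hg, add_zero]
  zero_mem' := by simp
  neg_mem' := by
    intro f hf
    simp only [Set.mem_setOf_eq, Pi.neg_apply, Finset.sum_neg_distrib] at *
    rw [hf, neg_zero]

def mfun (a b : Fin 5 → ZMod r) : Fin 5 → ZMod r :=
  fun i => 5 * (a i * b i) - ∑ j, a j * b j

lemma mfun_mem (a b : Fin 5 → ZMod r) : mfun r a b ∈ A r := by
  show ∑ i, (5 * (a i * b i) - ∑ j, a j * b j) = 0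
  rw [Finset.sum_sub_distrib, ← Finset.mul_sum, Finset.sum_const, Finset.card_univ]
  simp [nsmul_eq_mul]

def mA (a b : A r) : A r := ⟨mfun r a b, mfun_mem r a b⟩

@[simp] lemma mA_coe (a b : A r) (i : Fin 5) :
    (mA r a b : Fin 5 → ZMod r) i
      = 5 * ((a : Fin 5 → ZMod r) i * (b : Fin 5 → ZMod r) i)
        - ∑ j, (a : Fin 5 → ZMod r) j * (b : Fin 5 → ZMod r) j := rfl

lemma mA_add_left (a a' b : A r) : mA r (a + a') b = mA r a b + mA r a' b := by
  apply Subtype.ext; funext i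
  simp [mA, mfun, Finset.sum_add_distrib, add_mul]
  ring

lemma mA_add_right (a b b' : A r) : mA r a (b + b') = mA r a b + mA r a b' := by
  apply Subtype.ext; funext i
  simp [mA, mfun, Finset.sum_add_distrib, mul_add]
  ring

def mAl (b : A r) : A r →+ A r := AddMonoidHom.mk' (fun a => mA r a b) (fun a a' => mA_add_left r a a' b)
def mAr (a : A r) : A r →+ A r := AddMonoidHom.mk' (fun b => mA r a b) (fun b b' => mA_add_right r a b b')

@[simp] lemma mA_zero_left (b : A r) : mA r 0 b = 0 := (mAl r b).map_zero
@[simp] lemma mA_zero_right (a : A r) : mA r a 0 = 0 := (mAr r a).map_zero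
@[simp] lemma mA_neg_left (a b : A r) : mA r (-a) b = -(mA r a b) := (mAl r b).map_neg a
@[simp] lemma mA_neg_right (a b : A r) : mA r a (-b) = -(mA r a b) := (mAr r a).map_neg b
lemma mA_nsmul_left (n : ℕ) (a b : A r) : mA r (n • a) b = n • mA r a b := (mAl r b).map_nsmul n a
lemma mA_zsmul_left (n : ℤ) (a b : A r) : mA r (n • a) b = n • mA r a b := (mAl r b).map_zsmul n a
lemma mA_zsmul_right (n : ℤ) (a b : A r) : mA r a (n • b) = n • mA r a b := (mAr r a).map_zsmul n b

@[ext] structure P where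
  a : A r
  b : A r
  c : A r

variable {r}

instance : Mul (P r) := ⟨fun x y => ⟨x.a + y.a, x.b + y.b, x.c + y.c + mA r x.a y.b⟩⟩
instance : One (P r) := ⟨⟨0, 0, 0⟩⟩
instance : Inv (P r) := ⟨fun x => ⟨-x.a, -x.b, -x.c + mA r x.a x.b⟩⟩

@[simp] lemma mul_a (x y : P r) : (x * y).a = x.a + y.a := rfl
@[simp] lemma mul_b (x y : P r) : (x * y).b = x.b + y.b := rfl
@[simp] lemma mul_c (x y : P r) : (x * y).c = x.c + y.c + mA r x.a y.b := rfl
@[simp] lemma one_a : (1 : P r).a = 0 := rfl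
@[simp] lemma one_b : (1 : P r).b = 0 := rfl
@[simp] lemma one_c : (1 : P r).c = 0 := rfl
@[simp] lemma inv_a (x : P r) : (x⁻¹).a = -x.a := rfl
@[simp] lemma inv_b (x : P r) : (x⁻¹).b = -x.b := rfl
@[simp] lemma inv_c (x : P r) : (x⁻¹).c = -x.c + mA r x.a x.b := rfl

instance : Group (P r) where
  mul_assoc x y z := by
    ext <;> simp [mA_add_left, mA_add_right] <;> abel
  one_mul x := by ext <;> simp
  mul_one x := by ext <;> simp
  inv_mul_cancel x := by ext <;> simp



variable (r)

/-- action of a permutation on `A r` -/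
def permA (σ : Equiv.Perm (Fin 5)) (a : A r) : A r :=
  ⟨fun i => (a : Fin 5 → ZMod r) (σ⁻¹ i), by
    show ∑ i, (a : Fin 5 → ZMod r) (σ⁻¹ i) = 0
    rw [Equiv.sum_comp σ⁻¹ (a : Fin 5 → ZMod r)]; exact a.2⟩

@[simp] lemma permA_coe (σ : Equiv.Perm (Fin 5)) (a : A r) (i : Fin 5) :
    (permA r σ a : Fin 5 → ZMod r) i = (a : Fin 5 → ZMod r) (σ⁻¹ i) := rfl

lemma permA_add (σ : Equiv.Perm (Fin 5)) (a b : A r) :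
    permA r σ (a + b) = permA r σ a + permA r σ b := by
  apply Subtype.ext; funext i; simp

def permAhom (σ : Equiv.Perm (Fin 5)) : A r →+ A r :=
  AddMonoidHom.mk' (permA r σ) (permA_add r σ)

lemma permA_zsmul (σ : Equiv.Perm (Fin 5)) (n : ℤ) (a : A r) :
    permA r σ (n • a) = n • permA r σ a := (permAhom r σ).map_zsmul n a

lemma permA_comp (σ τ : Equiv.Perm (Fin 5)) (a : A r) :
    permA r σ (permA r τ a) = permA r (σ * τ) a := by
  apply Subtype.ext; funext i
  simp [mul_inv_rev, Equiv.Perm.mul_apply]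

@[simp] lemma permA_one (a : A r) : permA r 1 a = a := by
  apply Subtype.ext; funext i; simp

lemma permA_mA (σ : Equiv.Perm (Fin 5)) (a b : A r) :
    mA r (permA r σ a) (permA r σ b) = permA r σ (mA r a b) := by
  apply Subtype.ext; funext i
  simp only [mA_coe, permA_coe]
  rw [Equiv.sum_comp σ⁻¹ (fun j => (a : Fin 5 → ZMod r) j * (b : Fin 5 → ZMod r) j)]

/-- sign as an integer -/
def sg (σ : Equiv.Perm (Fin 5)) : ℤ := (Equiv.Perm.sign σ : ℤ)

lemma sg_mul (σ τ : Equiv.Perm (Fin 5)) : sg (σ * τ) = sg σ * sg τ := by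
  simp [sg]

@[simp] lemma sg_one : sg 1 = 1 := by simp [sg]

variable {r}

/-- the automorphism of `P r` induced by a permutation -/
def Pmap (σ : Equiv.Perm (Fin 5)) (x : P r) : P r :=
  ⟨permA r σ x.a, sg σ • permA r σ x.b, sg σ • permA r σ x.c⟩

@[simp] lemma Pmap_a (σ : Equiv.Perm (Fin 5)) (x : P r) : (Pmap σ x).a = permA r σ x.a := rfl
@[simp] lemma Pmap_b (σ : Equiv.Perm (Fin 5)) (x : P r) : (Pmap σ x).b = sg σ • permA r σ x.b := rfl
@[simp] lemma Pmap_c (σ : Equiv.Perm (Fin 5)) (x : P r) : (Pmap σ x).c = sg σ • permA r σ x.c := rfl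

lemma Pmap_one' (x : P r) : Pmap 1 x = x := by
  ext <;> simp

lemma Pmap_comp (σ τ : Equiv.Perm (Fin 5)) (x : P r) :
    Pmap σ (Pmap τ x) = Pmap (σ * τ) x := by
  ext <;> simp [permA_zsmul, permA_comp, smul_smul, sg_mul, mul_comm]

lemma Pmap_mul (σ : Equiv.Perm (Fin 5)) (x y : P r) :
    Pmap σ (x * y) = Pmap σ x * Pmap σ y := by
  ext <;> simp [permA_add, smul_add, mA_zsmul_right, permA_mA]

variable (r) in
/-- the action of `Sym(5)` on `P r` -/
def phi : Equiv.Perm (Fin 5) →* MulAut (P r) where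
  toFun σ :=
    { toFun := Pmap σ
      invFun := Pmap σ⁻¹
      left_inv := fun x => by rw [Pmap_comp, inv_mul_cancel, Pmap_one']
      right_inv := fun x => by rw [Pmap_comp, mul_inv_cancel, Pmap_one']
      map_mul' := Pmap_mul σ }
  map_one' := by
    ext x : 1
    exact Pmap_one' x
  map_mul' σ τ := by
    ext x : 1
    exact (Pmap_comp σ τ x).symm

@[simp] lemma phi_apply (σ : Equiv.Perm (Fin 5)) (x : P r) : phi r σ x = Pmap σ x := rfl

----------------------------------------------------------------
-- nilpotency facts

lemma central_of (x : P r) (ha : x.a = 0) (hb : x.b = 0) : x ∈ Subgroup.center (P r) := by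
  rw [Subgroup.mem_center_iff]
  intro g
  ext <;> simp [ha, hb] <;> abel

lemma commutator_aa (g h : P r) : (⁅g, h⁆).a = 0 := by
  show (g * h * g⁻¹ * h⁻¹).a = 0
  simp

lemma commutator_bb (g h : P r) : (⁅g, h⁆).b = 0 := by
  show (g * h * g⁻¹ * h⁻¹).b = 0
  simp

lemma comm_central (g h : P r) : ⁅g, h⁆ ∈ Subgroup.center (P r) :=
  central_of _ (commutator_aa g h) (commutator_bb g h)

lemma lcs1_le_center : (⊤ : Subgroup (P r)).lowerCentralSeries 1 ≤ Subgroup.center (P r) := by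
  rw [lowerCentralSeries_one, commutator_def, Subgroup.commutator_le]
  intro g _ h _
  exact comm_central g h

lemma lcs2_eq_bot : (⊤ : Subgroup (P r)).lowerCentralSeries 2 = ⊥ := by
  rw [show (⊤ : Subgroup (P r)).lowerCentralSeries 2
        = ⁅(⊤ : Subgroup (P r)).lowerCentralSeries 1, (⊤ : Subgroup (P r))⁆ from rfl,
    eq_bot_iff, Subgroup.commutator_le]
  intro g hg h _
  rw [Subgroup.mem_bot, commutatorElement_eq_one_iff_mul_comm]
  exact (Subgroup.mem_center_iff.mp (lcs1_le_center hg) h).symm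

----------------------------------------------------------------
-- powers and p-group structure

lemma mA_nsmul_left' (n : ℕ) (a b : A r) : mA r (n • a) b = n • mA r a b :=
  (mAl r b).map_nsmul n a

lemma pow_eval (x : P r) (n : ℕ) :
    x ^ n = ⟨n • x.a, n • x.b, n • x.c + n.choose 2 • mA r x.a x.b⟩ := by
  induction n with
  | zero => ext <;> simp
  | succ n ih =>
    rw [pow_succ, ih]
    ext <;>
      simp [succ_nsmul, mA_nsmul_left', Nat.choose_succ_succ, Nat.choose_one_right, add_nsmul] <;>
      abel

lemma A_r_smul (a : A r) : r • a = 0 := by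
  apply Subtype.ext; funext i
  show r • (a : Fin 5 → ZMod r) i = 0
  simp [nsmul_eq_mul, ZMod.natCast_self]

lemma A_dvd_smul {k : ℕ} (hk : r ∣ k) (a : A r) : k • a = 0 := by
  obtain ⟨t, rfl⟩ := hk
  rw [mul_nsmul, A_r_smul, smul_zero]

lemma pow_r (hodd : Odd r) (x : P r) : x ^ r = 1 := by
  have hdvd : r ∣ r.choose 2 := by
    obtain ⟨m, rfl⟩ := hodd
    rw [Nat.choose_two_right]
    have h1 : 2 * m + 1 - 1 = 2 * m := by omega
    rw [h1, show (2 * m + 1) * (2 * m) = (2 * m + 1) * m * 2 by ring, Nat.mul_div_cancel _ (by norm_num)]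
    exact ⟨m, by ring⟩
  rw [pow_eval]
  ext <;> simp [A_r_smul, A_dvd_smul hdvd, A_dvd_smul (dvd_refl r)]

lemma isPGroup (hodd : Odd r) : IsPGroup r (P r) := fun g =>
  ⟨1, by rw [pow_one]; exact pow_r hodd g⟩

----------------------------------------------------------------
-- special vectors

variable (r) in
def vA (i j : Fin 5) : A r :=
  ⟨fun k => (if k = i then 1 else 0) - (if k = j then 1 else 0), by
    show ∑ k, ((if k = i then (1 : ZMod r) else 0) - (if k = j then 1 else 0)) = 0
    rw [Finset.sum_sub_distrib, Finset.sum_ite_eq' Finset.univ i (fun _ => (1 : ZMod r)),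
      Finset.sum_ite_eq' Finset.univ j (fun _ => (1 : ZMod r))]
    simp⟩

@[simp] lemma vA_coe (i j k : Fin 5) :
    (vA r i j : Fin 5 → ZMod r) k
      = (if k = i then 1 else 0) - (if k = j then 1 else 0) := rfl

----------------------------------------------------------------
-- numerics in ZMod r

lemma five_ne (hr : r.Prime) (hr5 : r ≠ 5) : (5 : ZMod r) ≠ 0 := by
  haveI : NeZero r := ⟨hr.ne_zero⟩
  intro h
  rw [show ((5 : ZMod r)) = ((5 : ℕ) : ZMod r) by norm_cast,
    ZMod.natCast_eq_zero_iff] at h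
  exact hr5 ((Nat.prime_dvd_prime_iff_eq hr (by norm_num)).mp h)

lemma two_ne (hr : r.Prime) (hodd : Odd r) : (2 : ZMod r) ≠ 0 := by
  haveI : NeZero r := ⟨hr.ne_zero⟩
  intro h
  rw [show ((2 : ZMod r)) = ((2 : ℕ) : ZMod r) by norm_cast,
    ZMod.natCast_eq_zero_iff] at h
  have : r = 2 := ((Nat.prime_dvd_prime_iff_eq hr (by norm_num)).mp h)
  rw [this] at hodd
  exact (by norm_num : ¬ Odd 2) hodd

lemma mAvv_ne (h5 : (5 : ZMod r) ≠ 0) : mA r (vA r 0 1) (vA r 0 1) ≠ 0 := by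
  intro h
  have h0 := congrFun (congrArg Subtype.val h) 0
  have h2 := congrFun (congrArg Subtype.val h) 2
  simp only [mA_coe, vA_coe, show ((2 : Fin 5) = 0) = False by simp, show ((2 : Fin 5) = 1) = False by simp,
    if_false] at h0 h2
  norm_num at h0 h2
  exact h5 (by linear_combination h0 + h2)

lemma comm_ne_one (h5 : (5 : ZMod r) ≠ 0) :
    (⁅(⟨vA r 0 1, 0, 0⟩ : P r), (⟨0, vA r 0 1, 0⟩ : P r)⁆) ≠ 1 := by
  have hc : (⁅(⟨vA r 0 1, 0, 0⟩ : P r), (⟨0, vA r 0 1, 0⟩ : P r)⁆).c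
      = mA r (vA r 0 1) (vA r 0 1) := by
    show ((⟨vA r 0 1, 0, 0⟩ : P r) * ⟨0, vA r 0 1, 0⟩ * _ * _).c = _
    simp [mA_add_left, mA_add_right]
  intro h
  rw [h] at hc
  exact mAvv_ne h5 (by rw [← hc]; rfl)

instance nilpP : Group.IsNilpotent (P r) :=
  nilpotent_iff_lowerCentralSeries.mpr ⟨2, lcs2_eq_bot⟩

lemma class_two (h5 : (5 : ZMod r) ≠ 0) : Group.nilpotencyClass (P r) = 2 := by
  apply le_antisymm
  · exact lowerCentralSeries_eq_bot_iff_nilpotencyClass_le.mp lcs2_eq_bot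
  · by_contra hlt
    push_neg at hlt
    have h1 : (⊤ : Subgroup (P r)).lowerCentralSeries 1 = ⊥ :=
      lowerCentralSeries_eq_bot_iff_nilpotencyClass_le.mpr (by omega)
    apply comm_ne_one h5
    have mem : (⁅(⟨vA r 0 1, 0, 0⟩ : P r), (⟨0, vA r 0 1, 0⟩ : P r)⁆)
        ∈ (⊤ : Subgroup (P r)).lowerCentralSeries 1 := by
      rw [lowerCentralSeries_one, commutator_def]
      exact Subgroup.commutator_mem_commutator (Subgroup.mem_top _) (Subgroup.mem_top _)
    rw [h1] at mem
    exact Subgroup.mem_bot.mp mem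

----------------------------------------------------------------
-- faithfulness

lemma phi_injective (hr : r.Prime) (hodd : Odd r) : Function.Injective (phi r) := by
  haveI : Fact r.Prime := ⟨hr⟩
  rw [injective_iff_map_eq_one]
  intro σ hσ
  apply Equiv.ext
  intro i
  rw [Equiv.Perm.one_apply]
  by_contra hne
  set j : Fin 5 := if i = 0 then 1 else 0 with hj
  have hij : i ≠ j := by
    rcases eq_or_ne i 0 with h | h <;> simp [hj, h]
  have hx : phi r σ (⟨vA r i j, 0, 0⟩ : P r) = ⟨vA r i j, 0, 0⟩ := by
    rw [hσ]; rfl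
  have ha : permA r σ (vA r i j) = vA r i j := congrArg P.a hx
  have hval := congrFun (congrArg Subtype.val ha) (σ i)
  simp only [permA_coe, vA_coe, Equiv.Perm.inv_def, Equiv.symm_apply_apply] at hval
  simp only [eq_self_iff_true, if_true, if_neg hij, if_neg hne, sub_zero] at hval
  by_cases hj2 : σ i = j
  · rw [if_pos hj2] at hval
    have : (2 : ZMod r) = 0 := by linear_combination hval
    exact two_ne hr hodd this
  · rw [if_neg hj2] at hval
    have : (1 : ZMod r) = 0 := by linear_combination hval
    exact one_ne_zero this

----------------------------------------------------------------
-- fixed point freeness of the 5-cycle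

lemma sg_finRotate : sg (finRotate 5) = 1 := by decide

lemma fixedA (hr : r.Prime) (hr5 : r ≠ 5) (a : A r)
    (h : permA r (finRotate 5) a = a) : a = 0 := by
  haveI : Fact r.Prime := ⟨hr⟩
  have hstep : ∀ k, (a : Fin 5 → ZMod r) k = (a : Fin 5 → ZMod r) (finRotate 5 k) := by
    intro k
    have := congrFun (congrArg Subtype.val h) (finRotate 5 k)
    simp only [permA_coe, Equiv.Perm.inv_def, Equiv.symm_apply_apply] at this
    exact this
  have e1 : (a : Fin 5 → ZMod r) 1 = (a : Fin 5 → ZMod r) 0 := by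
    have := hstep 0; rw [show finRotate 5 0 = 1 by decide] at this; exact this.symm
  have e2 : (a : Fin 5 → ZMod r) 2 = (a : Fin 5 → ZMod r) 0 := by
    have := hstep 1; rw [show finRotate 5 1 = 2 by decide] at this; rw [← this, e1]
  have e3 : (a : Fin 5 → ZMod r) 3 = (a : Fin 5 → ZMod r) 0 := by
    have := hstep 2; rw [show finRotate 5 2 = 3 by decide] at this; rw [← this, e2]
  have e4 : (a : Fin 5 → ZMod r) 4 = (a : Fin 5 → ZMod r) 0 := by
    have := hstep 3; rw [show finRotate 5 3 = 4 by decide] at this; rw [← this, e3]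
  have hsum : ∑ k, (a : Fin 5 → ZMod r) k = 0 := a.2
  rw [Fin.sum_univ_five, e1, e2, e3, e4] at hsum
  have h5 : (5 : ZMod r) * (a : Fin 5 → ZMod r) 0 = 0 := by linear_combination hsum
  have h0 : (a : Fin 5 → ZMod r) 0 = 0 :=
    (mul_eq_zero.mp h5).resolve_left (five_ne hr hr5)
  clear hstep h hsum h5
  apply Subtype.ext; funext k
  show (a : Fin 5 → ZMod r) k = 0
  fin_cases k
  · exact h0
  · exact e1.trans h0
  · exact e2.trans h0
  · exact e3.trans h0
  · exact e4.trans h0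

lemma fpf (hr : r.Prime) (hr5 : r ≠ 5) (x : P r)
    (hx : Pmap (finRotate 5) x = x) : x = 1 := by
  have ha : permA r (finRotate 5) x.a = x.a := congrArg P.a hx
  have hb : permA r (finRotate 5) x.b = x.b := by
    have := congrArg P.b hx
    rwa [Pmap_b, sg_finRotate, one_zsmul] at this
  have hc : permA r (finRotate 5) x.c = x.c := by
    have := congrArg P.c hx
    rwa [Pmap_c, sg_finRotate, one_zsmul] at this
  ext <;> simp [fixedA hr hr5 _ ha, fixedA hr hr5 _ hb, fixedA hr hr5 _ hc]

lemma finiteP (hr : r ≠ 0) : Finite (P r) := by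
  haveI : NeZero r := ⟨hr⟩
  exact Finite.of_injective (fun x : P r => (x.a, x.b, x.c)) (by
    intro x y h
    simp only [Prod.mk.injEq] at h
    ext <;> simp [h.1, h.2.1, h.2.2])

end APW

/-- Theorem 2.4 (Astill–Parker–Waldecker): for every odd prime `r ≠ 5` there is a finite
`r`-group `P` of nilpotency class exactly two admitting a faithful action of `Sym(5)` in
which some element of order `5` acts fixed point freely. -/
theorem exists_class_two_r_group_with_sym5_action
    (r : ℕ) (hr : r.Prime) (hodd : Odd r) (hr5 : r ≠ 5) :
    ∃ (P : Type) (_ : Group P) (_ : Finite P) (_ : Group.IsNilpotent P),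
      (∃ k : ℕ, Nat.card P = r ^ k) ∧
      Group.nilpotencyClass P = 2 ∧
      ∃ φ : Equiv.Perm (Fin 5) →* MulAut P, Function.Injective φ ∧
        ∃ s : Equiv.Perm (Fin 5), orderOf s = 5 ∧ ∀ x : P, φ s x = x → x = 1 := by
  haveI : Fact r.Prime := ⟨hr⟩
  haveI : Finite (APW.P r) := APW.finiteP hr.ne_zero
  haveI : Fact (Nat.Prime 5) := ⟨by norm_num⟩
  have h5 : (5 : ZMod r) ≠ 0 := APW.five_ne hr hr5
  refine ⟨APW.P r, inferInstance, inferInstance, inferInstance, ?_, APW.class_two h5,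
    APW.phi r, APW.phi_injective hr hodd, finRotate 5, ?_, ?_⟩
  · exact IsPGroup.iff_card.mp (APW.isPGroup hodd)
  · exact orderOf_eq_prime (by decide) (by decide)
  · intro x hx
    exact APW.fpf hr hr5 x (by simpa using hx)
end

section
/- The projective special linear group PSL₂(49), i.e. the quotient of the special linear group SL₂ over the field with 49 elements (GaloisField 7 2) by its centre, admits no injective group homomorphism into the general linear group GL₄(ℤ/49ℤ) of invertible 4×4 matrices over ZMod 49. Equivalently, PSL₂(49) is not isomorphic to any subgroup of GL₄(ℤ/49ℤ). -/
instance : Fact (Nat.Prime 7) := ⟨by norm_num⟩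

/-! ### Auxiliary lemmas

The key fact is that any matrix `M ∈ GL₄(ℤ/49ℤ)` with `M ^ 7 = 1` is of the form `1 + 7 C`;
hence any two such matrices commute.  But `PSL₂(49)` contains two non-commuting elements of
order `7`, so it cannot embed into `GL₄(ℤ/49ℤ)`. -/

private lemma div7_of_cast_eq_zero : ∀ x : ZMod 49,
    ZMod.castHom (by norm_num : (7:ℕ) ∣ 49) (ZMod 7) x = 0 → ∃ y, x = 7 * y := by decide

private lemma cast_eq_zero_of_seven_mul : ∀ x : ZMod 49,
    (7:ZMod 49) * x = 0 → ZMod.castHom (by norm_num : (7:ℕ) ∣ 49) (ZMod 7) x = 0 := by decide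

private lemma pow4_eq_zero {n : Matrix (Fin 4) (Fin 4) (ZMod 7)} (h : n ^ 7 = 0) : n ^ 4 = 0 := by
  have hInt : IsIntegral (ZMod 7) n := IsIntegral.of_finite _ _
  have hmono := minpoly.monic hInt
  have hdvd : minpoly (ZMod 7) n ∣ Polynomial.X ^ 7 := minpoly.dvd _ _ (by simpa using h)
  obtain ⟨k, hk, hassoc⟩ := (dvd_prime_pow Polynomial.prime_X 7).mp hdvd
  have hmeq : minpoly (ZMod 7) n = Polynomial.X ^ k :=
    Polynomial.eq_of_monic_of_associated hmono (Polynomial.monic_X_pow k) hassoc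
  have hnk : n ^ k = 0 := by
    have h0 := minpoly.aeval (ZMod 7) n
    rw [hmeq] at h0; simpa using h0
  have hk4 : k ≤ 4 := by
    have hd := Polynomial.natDegree_le_of_dvd (Matrix.minpoly_dvd_charpoly n)
      (Matrix.charpoly_monic n).ne_zero
    rw [Matrix.charpoly_natDegree_eq_dim] at hd
    simpa [hmeq] using hd
  calc n^4 = n^(4-k) * n^k := by rw [← pow_add]; congr 1; omega
  _ = 0 := by rw [hnk, mul_zero]

set_option maxHeartbeats 2000000 in
private lemma eq_one_add_seven_smul {M : Matrix (Fin 4) (Fin 4) (ZMod 49)} (h : M ^ 7 = 1) :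
    ∃ C : Matrix (Fin 4) (Fin 4) (ZMod 49), M = 1 + (7 : ZMod 49) • C := by
  set f := ZMod.castHom (by norm_num : (7:ℕ) ∣ 49) (ZMod 7) with hf
  set ψ : Matrix (Fin 4) (Fin 4) (ZMod 49) →+* Matrix (Fin 4) (Fin 4) (ZMod 7) :=
    f.mapMatrix with hψ
  set N := M - 1 with hN
  have hM : M = 1 + N := by rw [hN]; abel
  have h2 : (ψ N) ^ 7 = 0 := by
    have hψN : ψ N = ψ M - 1 := by rw [hN, map_sub, map_one]
    rw [hψN, sub_pow_char_of_commute _ (Commute.one_right _), ← map_pow, h, map_one,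
      one_pow, sub_self]
  have h3 : (ψ N) ^ 4 = 0 := pow4_eq_zero h2
  have h4 : ∀ i j, ∃ y, (N^4) i j = 7 * y := by
    intro i j
    apply div7_of_cast_eq_zero
    have h5 : ψ (N^4) = 0 := by rw [map_pow, h3]
    have h6 := congrFun (congrFun h5 i) j
    simpa [hf, hψ, RingHom.mapMatrix_apply, Matrix.map_apply] using h6
  choose D hD using h4
  set Dm : Matrix (Fin 4) (Fin 4) (ZMod 49) := Matrix.of D with hDm
  have hND : N^4 = (7 : ZMod 49) • Dm := by
    ext i j
    simp only [Matrix.smul_apply, smul_eq_mul]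
    rw [hD i j]; rfl
  have hexp : (1 + N)^7 = 1 + 7*N + 21*N^2 + 35*N^3 + 35*N^4 + 21*N^5 + 7*N^6 + N^7 := by
    noncomm_ring
  have hrel : 7*N + 21*N^2 + 35*N^3 + 35*N^4 + 21*N^5 + 7*N^6 + N^7 = 0 := by
    have := hM ▸ h
    rw [hexp] at this
    have := congrArg (fun X => X - 1) this
    simpa [add_assoc, add_sub_cancel_left] using
      (by abel_nf at this ⊢; linear_combination (norm := abel) this : _)
  have hc : ∀ (c : ℕ) (X : Matrix (Fin 4) (Fin 4) (ZMod 49)),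
      ((c:ℕ) : Matrix (Fin 4) (Fin 4) (ZMod 49)) * X = ((c : ZMod 49)) • X := by
    intro c X
    rw [← nsmul_eq_mul, ← Nat.cast_smul_eq_nsmul (ZMod 49)]
  set G : Matrix (Fin 4) (Fin 4) (ZMod 49) :=
    N + (3:ZMod 49) • N^2 + (5:ZMod 49) • N^3 + N^3 * Dm with hG
  have hkey : 7*N + 21*N^2 + 35*N^3 + 35*N^4 + 21*N^5 + 7*N^6 + N^7 = (7:ZMod 49) • G := by
    have e1 : (7 : Matrix (Fin 4) (Fin 4) (ZMod 49)) * N = (7:ZMod 49) • N := by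
      have := hc 7 N; norm_num at this; exact this
    have e2 : (21 : Matrix (Fin 4) (Fin 4) (ZMod 49)) * N^2 = (21:ZMod 49) • N^2 := by
      have := hc 21 (N^2); norm_num at this; exact this
    have e3 : (35 : Matrix (Fin 4) (Fin 4) (ZMod 49)) * N^3 = (35:ZMod 49) • N^3 := by
      have := hc 35 (N^3); norm_num at this; exact this
    have e4 : (35 : Matrix (Fin 4) (Fin 4) (ZMod 49)) * N^4 = 0 := by
      have := hc 35 (N^4); norm_num at this
      rw [this, hND, smul_smul, show (35:ZMod 49) * 7 = 0 by decide, zero_smul]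
    have e5 : (21 : Matrix (Fin 4) (Fin 4) (ZMod 49)) * N^5 = 0 := by
      have := hc 21 (N^5); norm_num at this
      rw [this, show N^5 = N * N^4 by rw [← pow_succ'], hND, mul_smul_comm, smul_smul,
        show (21:ZMod 49) * 7 = 0 by decide, zero_smul]
    have e6 : (7 : Matrix (Fin 4) (Fin 4) (ZMod 49)) * N^6 = 0 := by
      have := hc 7 (N^6); norm_num at this
      rw [this, show N^6 = N^2 * N^4 by rw [← pow_add], hND, mul_smul_comm, smul_smul,
        show (7:ZMod 49) * 7 = 0 by decide, zero_smul]
    have e7 : N^7 = (7:ZMod 49) • (N^3 * Dm) := by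
      rw [show N^7 = N^3 * N^4 by rw [← pow_add], hND, mul_smul_comm]
    rw [e1, e2, e3, e4, e5, e6, e7, hG]
    rw [show (21:ZMod 49) = 7 * 3 by decide, show (35:ZMod 49) = 7 * 5 by decide,
      mul_smul, mul_smul]
    rw [smul_add, smul_add, smul_add]
    abel
  have hGz : (7:ZMod 49) • G = 0 := by rw [← hkey, hrel]
  have hψG : ψ G = 0 := by
    ext i j
    have h7ij : (7:ZMod 49) * G i j = 0 := by
      have := congrFun (congrFun hGz i) j
      simpa [Matrix.smul_apply, smul_eq_mul] using this
    have := cast_eq_zero_of_seven_mul _ h7ij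
    simpa [hf, hψ, RingHom.mapMatrix_apply, Matrix.map_apply] using this
  set n : Matrix (Fin 4) (Fin 4) (ZMod 7) := ψ N with hn
  set d : Matrix (Fin 4) (Fin 4) (ZMod 7) := ψ Dm with hd'
  have hGe : n + (3:ZMod 7) • n^2 + (5:ZMod 7) • n^3 + n^3 * d = 0 := by
    have hsm : ∀ (c : ZMod 49) (X : Matrix (Fin 4) (Fin 4) (ZMod 49)),
        ψ (c • X) = f c • ψ X := by
      intro c X; ext i j
      simp [hψ, RingHom.mapMatrix_apply, Matrix.map_apply, Matrix.smul_apply, smul_eq_mul]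
    rw [hG] at hψG
    rw [map_add, map_add, map_add, map_mul, hsm, hsm, map_pow] at hψG
    have f3 : f (3:ZMod 49) = 3 := by decide
    have f5 : f (5:ZMod 49) = 5 := by decide
    rw [f3, f5] at hψG
    rw [map_pow] at hψG; exact hψG
  have hn4 : n^4 = 0 := h3
  have hn3 : n^3 = 0 := by
    have := congrArg (fun X => n^2 * X) hGe
    simp only [mul_add, mul_zero, mul_smul_comm] at this
    rw [show n^2 * n = n^3 by rw [← pow_succ], show n^2 * n^2 = n^4 by rw [← pow_add],
      show n^2 * n^3 = n^4 * n by rw [← pow_add, ← pow_succ],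
      show n^2 * (n^3 * d) = n^4 * (n * d) by rw [← mul_assoc, ← mul_assoc, ← pow_add, pow_succ],
      hn4, zero_mul, zero_mul, smul_zero, smul_zero] at this
    simpa using this
  have hn2 : n^2 = 0 := by
    have := congrArg (fun X => n * X) hGe
    simp only [mul_add, mul_zero, mul_smul_comm] at this
    rw [show n * n = n^2 by rw [← pow_two], show n * n^2 = n^3 by rw [← pow_succ'],
      show n * n^3 = n^4 by rw [← pow_succ'],
      show n * (n^3 * d) = n^4 * d by rw [← mul_assoc, ← pow_succ'],
      hn3, hn4, zero_mul, smul_zero, smul_zero] at this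
    simpa using this
  have hn0 : n = 0 := by
    rw [hn2, hn3, smul_zero, smul_zero, zero_mul] at hGe
    simpa using hGe
  have h8 : ∀ i j, ∃ y, N i j = 7 * y := by
    intro i j
    apply div7_of_cast_eq_zero
    have := congrFun (congrFun hn0 i) j
    simpa [hf, hn, hψ, RingHom.mapMatrix_apply, Matrix.map_apply] using this
  choose C hC using h8
  refine ⟨Matrix.of C, ?_⟩
  rw [hM]
  congr 1
  ext i j
  simp only [Matrix.smul_apply, smul_eq_mul]
  rw [hC i j]; rfl

private lemma comm_of_pow7 {A B : Matrix (Fin 4) (Fin 4) (ZMod 49)}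
    (hA : A^7 = 1) (hB : B^7 = 1) : A * B = B * A := by
  obtain ⟨C, rfl⟩ := eq_one_add_seven_smul hA
  obtain ⟨C', rfl⟩ := eq_one_add_seven_smul hB
  have key : ∀ X Y : Matrix (Fin 4) (Fin 4) (ZMod 49),
      ((7:ZMod 49) • X) * ((7:ZMod 49) • Y) = 0 := by
    intro X Y
    rw [smul_mul_assoc, mul_smul_comm, smul_smul, show (7:ZMod 49) * 7 = 0 by decide, zero_smul]
  have expand : ∀ X Y : Matrix (Fin 4) (Fin 4) (ZMod 49),
      (1 + X) * (1 + Y) = 1 + X + Y + X * Y := by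
    intro X Y; noncomm_ring
  rw [expand, expand, key, key]
  abel

private lemma comm_of_pow7_GL (A B : Matrix.GeneralLinearGroup (Fin 4) (ZMod 49))
    (hA : A^7 = 1) (hB : B^7 = 1) : A * B = B * A := by
  have hA' : (A : Matrix (Fin 4) (Fin 4) (ZMod 49))^7 = 1 := by
    rw [← Units.val_pow_eq_pow_val, hA, Units.val_one]
  have hB' : (B : Matrix (Fin 4) (Fin 4) (ZMod 49))^7 = 1 := by
    rw [← Units.val_pow_eq_pow_val, hB, Units.val_one]
  have := comm_of_pow7 hA' hB'
  exact Units.ext (by simpa using this)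

namespace PSL49Aux

noncomputable section

abbrev F := GaloisField 7 2
abbrev SL := Matrix.SpecialLinearGroup (Fin 2) F

def xSL : SL := ⟨!![1,1;0,1], by simp [Matrix.det_fin_two_of]⟩
def ySL : SL := ⟨!![1,0;1,1], by simp [Matrix.det_fin_two_of]⟩

lemma xpowk (k : ℕ) : (!![1,1;0,1] : Matrix (Fin 2) (Fin 2) F)^k = !![1,(k:F);0,1] := by
  induction k with
  | zero => simp [Matrix.one_fin_two]
  | succ k ih =>
      rw [pow_succ, ih, Matrix.mul_fin_two]
      ext i j
      fin_cases i <;> fin_cases j <;> simp <;> push_cast <;> ring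

lemma ypowk (k : ℕ) : (!![1,0;1,1] : Matrix (Fin 2) (Fin 2) F)^k = !![1,0;(k:F),1] := by
  induction k with
  | zero => simp [Matrix.one_fin_two]
  | succ k ih =>
      rw [pow_succ, ih, Matrix.mul_fin_two]
      ext i j
      fin_cases i <;> fin_cases j <;> simp <;> push_cast <;> ring

lemma xpow7 : xSL ^ 7 = 1 := by
  apply Subtype.ext
  rw [Matrix.SpecialLinearGroup.coe_pow]
  show (!![1,1;0,1] : Matrix (Fin 2) (Fin 2) F) ^ 7 = _
  have h7 : ((7:ℕ):F) = 0 := CharP.cast_eq_zero F 7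
  rw [xpowk 7, h7, Matrix.SpecialLinearGroup.coe_one, Matrix.one_fin_two]

lemma ypow7 : ySL ^ 7 = 1 := by
  apply Subtype.ext
  rw [Matrix.SpecialLinearGroup.coe_pow]
  show (!![1,0;1,1] : Matrix (Fin 2) (Fin 2) F) ^ 7 = _
  have h7 : ((7:ℕ):F) = 0 := CharP.cast_eq_zero F 7
  rw [ypowk 7, h7, Matrix.SpecialLinearGroup.coe_one, Matrix.one_fin_two]

lemma noncentral : (xSL * ySL)⁻¹ * (ySL * xSL) ∉ Subgroup.center SL := by
  intro hz
  set z : SL := (xSL * ySL)⁻¹ * (ySL * xSL) with hzdef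
  obtain ⟨r, -, hrz⟩ := Matrix.SpecialLinearGroup.mem_center_iff.mp hz
  have hmul : (xSL * ySL) * z = ySL * xSL := by
    rw [hzdef]; exact mul_inv_cancel_left _ _
  have hm := congrArg (fun (A : SL) => (A : Matrix (Fin 2) (Fin 2) F)) hmul
  simp only [Matrix.SpecialLinearGroup.coe_mul] at hm
  rw [← hrz] at hm
  have hs : Matrix.scalar (Fin 2) r = !![r,0;0,r] := by
    ext i j; fin_cases i <;> fin_cases j <;>
      simp [Matrix.scalar_apply, Matrix.diagonal]
  have hx : (xSL : Matrix (Fin 2) (Fin 2) F) = !![1,1;0,1] := rfl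
  have hy : (ySL : Matrix (Fin 2) (Fin 2) F) = !![1,0;1,1] := rfl
  rw [hx, hy, hs, Matrix.mul_fin_two, Matrix.mul_fin_two, Matrix.mul_fin_two] at hm
  have h00 := congrFun (congrFun hm 0) 0
  have h01 := congrFun (congrFun hm 0) 1
  norm_num at h00 h01
  rw [h01] at h00
  have : (1:F) = 0 := by linear_combination h00
  exact one_ne_zero this

end

end PSL49Aux

/-- Lemma 4.1 (Astill–Parker–Waldecker): `PSL₂(49)` is not isomorphic to a subgroup of
`GL₄(ℤ/49ℤ)`: there is no injective group homomorphism from the quotient of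
`SL₂(GaloisField 7 2)` by its centre into `GL₄(ZMod 49)`. -/
theorem psl_two_49_not_subgroup_GL4_Z49 :
    ¬ ∃ f : (Matrix.SpecialLinearGroup (Fin 2) (GaloisField 7 2) ⧸
        Subgroup.center (Matrix.SpecialLinearGroup (Fin 2) (GaloisField 7 2))) →*
        Matrix.GeneralLinearGroup (Fin 4) (ZMod 49),
      Function.Injective f := by
  rintro ⟨f, hf⟩
  open PSL49Aux in
  let mk := QuotientGroup.mk' (Subgroup.center PSL49Aux.SL)
  have hfx7 : (f (mk PSL49Aux.xSL))^7 = 1 := by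
    rw [← map_pow, ← map_pow, PSL49Aux.xpow7, map_one, map_one]
  have hfy7 : (f (mk PSL49Aux.ySL))^7 = 1 := by
    rw [← map_pow, ← map_pow, PSL49Aux.ypow7, map_one, map_one]
  have hcomm := comm_of_pow7_GL _ _ hfx7 hfy7
  have h1 : f (mk (PSL49Aux.xSL * PSL49Aux.ySL)) = f (mk PSL49Aux.xSL) * f (mk PSL49Aux.ySL) := by
    rw [map_mul, map_mul]
  have h2 : f (mk (PSL49Aux.ySL * PSL49Aux.xSL)) = f (mk PSL49Aux.ySL) * f (mk PSL49Aux.xSL) := by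
    rw [map_mul, map_mul]
  have := hf (h1.trans (hcomm.trans h2.symm))
  have hmem : (PSL49Aux.xSL * PSL49Aux.ySL)⁻¹ * (PSL49Aux.ySL * PSL49Aux.xSL) ∈
      Subgroup.center PSL49Aux.SL := by
    rw [← QuotientGroup.eq]
    exact this
  exact PSL49Aux.noncentral hmem
end

section
/- Let r be an odd prime with r ≠ 5 and let V be the deleted permutation module over ZMod r. Then V is irreducible as a module for the alternating group Y = alternatingGroup (Fin 5): the only Y-invariant ZMod r-subspaces of V are 0 and V itself. -/
/-- The deleted permutation module: functions `Fin 5 → ZMod r` summing to zero. -/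
def V (r : ℕ) : Submodule (ZMod r) (Fin 5 → ZMod r) where
  carrier := {f | ∑ i, f i = 0}
  add_mem' := by
    intro a b ha hb
    simp only [Set.mem_setOf_eq, Pi.add_apply, Finset.sum_add_distrib] at *
    rw [ha, hb, add_zero]
  zero_mem' := by simp
  smul_mem' := by
    intro c f hf
    simp only [Set.mem_setOf_eq, Pi.smul_apply, smul_eq_mul, ← Finset.mul_sum] at *
    rw [hf, mul_zero]

/-- The permutation action of `Equiv.Perm (Fin 5)` on `V r`, given by `σ • f = f ∘ σ⁻¹`. -/
def rho (r : ℕ) : Representation (ZMod r) (Equiv.Perm (Fin 5)) (V r) where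
  toFun σ :=
    { toFun := fun f => ⟨fun i => (f : Fin 5 → ZMod r) (σ⁻¹ i),
        (Equiv.sum_comp σ⁻¹ (f : Fin 5 → ZMod r)).trans f.2⟩
      map_add' := fun _ _ => rfl
      map_smul' := fun _ _ => rfl }
  map_one' := rfl
  map_mul' := fun _ _ => rfl

-- basics
lemma mem_V (r : ℕ) (f : Fin 5 → ZMod r) : f ∈ V r ↔ ∑ i, f i = 0 := Iff.rfl

def dvec (r : ℕ) (i j : Fin 5) : V r :=
  ⟨Pi.single i 1 - Pi.single j 1, by
    simp [mem_V, Finset.sum_sub_distrib]⟩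

lemma rho_coe (r : ℕ) (σ : Equiv.Perm (Fin 5)) (x : V r) (p : Fin 5) :
    ((rho r σ x : V r) : Fin 5 → ZMod r) p = (x : Fin 5 → ZMod r) (σ⁻¹ p) := rfl

lemma rho_dvec (r : ℕ) (σ : Equiv.Perm (Fin 5)) (i j : Fin 5) :
    rho r σ (dvec r i j) = dvec r (σ i) (σ j) := by
  apply Subtype.ext
  funext p
  show ((Pi.single i 1 - Pi.single j 1 : Fin 5 → ZMod r)) (σ⁻¹ p) = ((Pi.single (σ i) 1 - Pi.single (σ j) 1 : Fin 5 → ZMod r)) p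
  simp only [dvec, Pi.sub_apply, Pi.single_apply]
  simp only [Equiv.Perm.inv_eq_iff_eq]

lemma core (r : ℕ) (U : Submodule (ZMod r) (V r))
    (hU : ∀ σ ∈ alternatingGroup (Fin 5), ∀ f ∈ U, rho r σ f ∈ U)
    (f : V r) (hfU : f ∈ U) :
    ((f : Fin 5 → ZMod r) 0 - (f : Fin 5 → ZMod r) 1) • dvec r 2 1 ∈ U := by
  have hσ1A : Equiv.swap (0:Fin 5) 1 * Equiv.swap 2 3 ∈ alternatingGroup (Fin 5) :=
    Equiv.Perm.mem_alternatingGroup.2 (by decide)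
  have hτA : Equiv.swap (2:Fin 5) 3 * Equiv.swap 1 4 ∈ alternatingGroup (Fin 5) :=
    Equiv.Perm.mem_alternatingGroup.2 (by decide)
  have hρA : Equiv.swap (1:Fin 5) 4 * Equiv.swap 4 2 ∈ alternatingGroup (Fin 5) :=
    Equiv.Perm.mem_alternatingGroup.2 (by decide)
  set g := f - rho r (Equiv.swap (0:Fin 5) 1 * Equiv.swap 2 3) f with hg
  have hgU : g ∈ U := U.sub_mem hfU (hU _ hσ1A f hfU)
  set w := g + rho r (Equiv.swap (2:Fin 5) 3 * Equiv.swap 1 4) g with hw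
  have hwU : w ∈ U := U.add_mem hgU (hU _ hτA g hgU)
  have hu : w - rho r (Equiv.swap (1:Fin 5) 4 * Equiv.swap 4 2) w
      = ((f : Fin 5 → ZMod r) 0 - (f : Fin 5 → ZMod r) 1) • dvec r 2 1 := by
    apply Subtype.ext
    funext p
    simp only [hw, hg, AddSubgroupClass.coe_sub, Submodule.coe_add, SetLike.val_smul,
      Pi.sub_apply, Pi.add_apply, Pi.smul_apply, rho_coe, dvec, smul_eq_mul]
    fin_cases p <;>
      simp (config := { decide := true }) [Equiv.swap_apply_def, Pi.single_apply]
  rw [← hu]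
  exact U.sub_mem hwU (hU _ hρA w hwU)

set_option maxRecDepth 10000 in
lemma trans01 : ∀ p q : Fin 5, p ≠ q →
    ∃ σ : Equiv.Perm (Fin 5), Equiv.Perm.sign σ = 1 ∧ σ 0 = p ∧ σ 1 = q := by decide

lemma alt_two_trans (i j p q : Fin 5) (hij : i ≠ j) (hpq : p ≠ q) :
    ∃ σ ∈ alternatingGroup (Fin 5), σ i = p ∧ σ j = q := by
  obtain ⟨σ, hσ, hσ0, hσ1⟩ := trans01 i j hij
  obtain ⟨τ, hτ, hτ0, hτ1⟩ := trans01 p q hpq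
  refine ⟨τ * σ⁻¹, ?_, ?_, ?_⟩
  · exact Subgroup.mul_mem _ (Equiv.Perm.mem_alternatingGroup.2 hτ)
      (Subgroup.inv_mem _ (Equiv.Perm.mem_alternatingGroup.2 hσ))
  · have : σ⁻¹ i = 0 := by rw [← hσ0, Equiv.Perm.inv_def, Equiv.symm_apply_apply]
    simp [Equiv.Perm.mul_apply, this, hτ0]
  · have : σ⁻¹ j = 1 := by rw [← hσ1, Equiv.Perm.inv_def, Equiv.symm_apply_apply]
    simp [Equiv.Perm.mul_apply, this, hτ1]

/-- For any odd prime `r ≠ 5`, the deleted permutation module `V` over `ZMod r` is an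
irreducible module for the alternating group `Alt(5)`: its only invariant subspaces
are `0` and `V`. -/
theorem deleted_permutation_module_irreducible
    (r : ℕ) (hr : r.Prime) (hodd : Odd r) (hr5 : r ≠ 5)
    (U : Submodule (ZMod r) (V r))
    (hU : ∀ σ ∈ alternatingGroup (Fin 5), ∀ f ∈ U, rho r σ f ∈ U) :
    U = ⊥ ∨ U = ⊤ := by
  by_cases hbot : U = ⊥
  · exact Or.inl hbot
  right
  haveI : Fact r.Prime := ⟨hr⟩
  obtain ⟨f, hfU, hf0⟩ := (Submodule.ne_bot_iff U).1 hbot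
  have hsum : ∑ i, (f : Fin 5 → ZMod r) i = 0 := f.2
  -- f is not constant
  have hex : ∃ i j : Fin 5, (f : Fin 5 → ZMod r) i ≠ (f : Fin 5 → ZMod r) j := by
    by_contra h
    push_neg at h
    have h5 : (5 : ZMod r) * (f : Fin 5 → ZMod r) 0 = 0 := by
      rw [Fin.sum_univ_five] at hsum
      rw [h 1 0, h 2 0, h 3 0, h 4 0] at hsum
      linear_combination hsum
    have h5ne : (5 : ZMod r) ≠ 0 := by
      intro h50
      have : (r : ℕ) ∣ 5 := by
        haveI : NeZero r := ⟨hr.ne_zero⟩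
        exact (ZMod.natCast_eq_zero_iff 5 r).1 (by exact_mod_cast h50)
      exact hr5 ((Nat.prime_dvd_prime_iff_eq hr (by norm_num)).1 this)
    have hf00 : (f : Fin 5 → ZMod r) 0 = 0 := by
      rcases mul_eq_zero.1 h5 with h' | h'
      · exact absurd h' h5ne
      · exact h'
    apply hf0
    apply Subtype.ext
    funext p
    rw [h p 0, hf00]
    rfl
  obtain ⟨i, j, hij⟩ := hex
  have hne : i ≠ j := fun h => hij (by rw [h])
  obtain ⟨σ, hσA, hσ0, hσ1⟩ := alt_two_trans 0 1 i j (by decide) hne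
  have hf'U : rho r σ⁻¹ f ∈ U := hU σ⁻¹ (Subgroup.inv_mem _ hσA) f hfU
  have h01 : ((rho r σ⁻¹ f : V r) : Fin 5 → ZMod r) 0
      ≠ ((rho r σ⁻¹ f : V r) : Fin 5 → ZMod r) 1 := by
    rw [rho_coe, rho_coe, inv_inv, hσ0, hσ1]
    exact hij
  have hd := core r U hU _ hf'U
  have ha := sub_ne_zero.2 h01
  have hd21 : dvec r 2 1 ∈ U := by
    have h2 := U.smul_mem (((rho r σ⁻¹ f : V r) : Fin 5 → ZMod r) 0
      - ((rho r σ⁻¹ f : V r) : Fin 5 → ZMod r) 1)⁻¹ hd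
    rwa [smul_smul, inv_mul_cancel₀ ha, one_smul] at h2
  have hall : ∀ p q : Fin 5, dvec r p q ∈ U := by
    intro p q
    rcases eq_or_ne p q with h | h
    · have hz : dvec r p q = 0 := by
        apply Subtype.ext
        simp [dvec, h]
      rw [hz]; exact U.zero_mem
    · obtain ⟨π, hπA, hπ2, hπ1⟩ := alt_two_trans 2 1 p q (by decide) h
      have h3 := hU π hπA _ hd21
      rwa [rho_dvec, hπ2, hπ1] at h3
  rw [Submodule.eq_top_iff']
  intro x
  have hxsum : ∑ i, (x : Fin 5 → ZMod r) i = 0 := x.2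
  have hx : x = ∑ i, (x : Fin 5 → ZMod r) i • dvec r i 0 := by
    apply Subtype.ext
    funext p
    rw [AddSubmonoidClass.coe_finset_sum]
    simp only [SetLike.val_smul, dvec, Fin.sum_univ_five, Pi.add_apply, Pi.smul_apply,
      Pi.sub_apply, Pi.single_apply, smul_eq_mul]
    rw [Fin.sum_univ_five] at hxsum
    fin_cases p <;> simp (config := { decide := true }) <;> linear_combination hxsum
  rw [hx]
  exact Submodule.sum_mem U (fun i _ => U.smul_mem _ (hall i 0))
end
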